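/- arXiv:1410.6553 — 3 statements merged into one kernel-verified Lean document; each statement's English description precedes it below -/
import Mathlib

section
/- Let $w\in\mathbb{C}\setminus\{0\}$ and let $B$ be a finite Blaschke product whose zeros $a_1,\dots,a_n$ are all nonzero, and suppose $B'(a_j)\neq 0$ for all $j$ and $B'(0)\neq 0$. Then $w$ is a zero of $B'$ if and only if $1/\bar{w}$ is a zero of $B'$ (i.e., the zero set of $B'$ in $\mathbb{C}\setminus\{0\}$ is symmetric with respect to the unit circle). -/
open Complex Finset

theorem blaschke_aux_hasDerivAt (n : ℕ) (c : ℂ) (a : Fin n → ℂ) (z : ℂ)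
    (hden : ∀ j, 1 - (starRingEnd ℂ) (a j) * z ≠ 0) :
    HasDerivAt (fun z => c * ∏ j, (z - a j) / (1 - (starRingEnd ℂ) (a j) * z))
      (c * ∑ j, (∏ k ∈ Finset.univ.erase j, (z - a k) / (1 - (starRingEnd ℂ) (a k) * z)) *
        ((1 - (starRingEnd ℂ) (a j) * a j) / (1 - (starRingEnd ℂ) (a j) * z) ^ 2)) z := by
  have h : ∀ j : Fin n, HasDerivAt (fun z => (z - a j) / (1 - (starRingEnd ℂ) (a j) * z))
      ((1 - (starRingEnd ℂ) (a j) * a j) / (1 - (starRingEnd ℂ) (a j) * z) ^ 2) z := by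
    intro j
    have h1 : HasDerivAt (fun z : ℂ => z - a j) 1 z := (hasDerivAt_id z).sub_const (a j)
    have h2 : HasDerivAt (fun z : ℂ => 1 - (starRingEnd ℂ) (a j) * z)
        (-((starRingEnd ℂ) (a j))) z := by
      simpa using ((hasDerivAt_id z).const_mul ((starRingEnd ℂ) (a j))).const_sub 1
    have h3 := h1.fun_div h2 (hden j)
    convert h3 using 2
    · rfl
    · rfl
    ring
  have hp := HasDerivAt.fun_finsetProd (x := z) (u := (Finset.univ : Finset (Fin n)))
    (f := fun j z => (z - a j) / (1 - (starRingEnd ℂ) (a j) * z))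
    (f' := fun j => (1 - (starRingEnd ℂ) (a j) * a j) / (1 - (starRingEnd ℂ) (a j) * z) ^ 2)
    (fun i _ => h i)
  simpa [smul_eq_mul] using hp.const_mul c

theorem blaschke_aux_field (A C d e q w : ℂ) (hA : A ≠ 0) (hC : C ≠ 0) (hd : d ≠ 0)
    (he : e ≠ 0) (hw : w ≠ 0) :
    C / A * (q / (d * w⁻¹) ^ 2) * (d * A / (e * C)) ^ 2 = w ^ 2 * (A / C * (q / e ^ 2)) := by
  field_simp

set_option maxHeartbeats 1000000 in
/-- The zero set of `B'` in `ℂ \ {0}` (away from the poles of the rational function `B`)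
is symmetric with respect to the unit circle. -/
theorem blaschke_deriv_zeros_symmetric (n : ℕ) (c : ℂ) (hc : ‖c‖ = 1)
    (a : Fin n → ℂ) (ha : ∀ j, ‖a j‖ < 1) (ha0 : ∀ j, a j ≠ 0)
    (B : ℂ → ℂ)
    (hB : B = fun z => c * ∏ j, (z - a j) / (1 - (starRingEnd ℂ) (a j) * z))
    (hBa : ∀ j, deriv B (a j) ≠ 0) (hB0 : deriv B 0 ≠ 0)
    (w : ℂ) (hw : w ≠ 0)
    (hwz : ∀ j, w ≠ a j) (hwp : ∀ j, (starRingEnd ℂ) (a j) * w ≠ 1) :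
    deriv B w = 0 ↔ deriv B (1 / (starRingEnd ℂ) w) = 0 := by
  have hc0 : c ≠ 0 := by
    intro h; rw [h] at hc; simp at hc
  have hcw : (starRingEnd ℂ) w ≠ 0 := by
    simpa using hw
  set w' : ℂ := 1 / (starRingEnd ℂ) w with hw'
  have hden_w : ∀ j, 1 - (starRingEnd ℂ) (a j) * w ≠ 0 := fun j =>
    sub_ne_zero.mpr fun h => hwp j h.symm
  have hsub_w : ∀ j, w - a j ≠ 0 := fun j => sub_ne_zero.mpr (hwz j)
  have hden_w' : ∀ j, 1 - (starRingEnd ℂ) (a j) * w' ≠ 0 := by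
    intro j h
    apply hwz j
    rw [hw'] at h
    field_simp at h
    have h2 := congrArg (starRingEnd ℂ) h
    have h3 : w - a j = 0 := by simpa using h2
    exact sub_eq_zero.mp h3
  have h1 : deriv B w = c * ∑ j, (∏ k ∈ Finset.univ.erase j,
      (w - a k) / (1 - (starRingEnd ℂ) (a k) * w)) *
        ((1 - (starRingEnd ℂ) (a j) * a j) / (1 - (starRingEnd ℂ) (a j) * w) ^ 2) := by
    rw [hB]; exact (blaschke_aux_hasDerivAt n c a w hden_w).deriv
  have h2 : deriv B w' = c * ∑ j, (∏ k ∈ Finset.univ.erase j,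
      (w' - a k) / (1 - (starRingEnd ℂ) (a k) * w')) *
        ((1 - (starRingEnd ℂ) (a j) * a j) / (1 - (starRingEnd ℂ) (a j) * w') ^ 2) := by
    rw [hB]; exact (blaschke_aux_hasDerivAt n c a w' hden_w').deriv
  set P : ℂ := ∏ j, (w - a j) / (1 - (starRingEnd ℂ) (a j) * w) with hP
  have hPne : P ≠ 0 := Finset.prod_ne_zero_iff.mpr fun j _ =>
    div_ne_zero (hsub_w j) (hden_w j)
  -- conj of each factor at w'
  have hcw' : (starRingEnd ℂ) w' = w⁻¹ := by
    rw [hw']; rw [map_div₀, map_one]; simp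
  have efac : ∀ k : Fin n, (starRingEnd ℂ) ((w' - a k) / (1 - (starRingEnd ℂ) (a k) * w'))
      = (1 - (starRingEnd ℂ) (a k) * w) / (w - a k) := by
    intro k
    have hxk : (1 : ℂ) - a k * w⁻¹ = (w - a k) * w⁻¹ := by
      rw [sub_mul, mul_inv_cancel₀ hw]
    have hyk : w⁻¹ - (starRingEnd ℂ) (a k) = (1 - (starRingEnd ℂ) (a k) * w) * w⁻¹ := by
      rw [sub_mul, one_mul, mul_assoc, mul_inv_cancel₀ hw, mul_one]
    rw [map_div₀, map_sub, map_sub, map_mul, map_one, hcw', Complex.conj_conj, hxk, hyk]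
    exact mul_div_mul_right _ _ (inv_ne_zero hw)
  -- key identity
  have key : (starRingEnd ℂ) (deriv B w') * (c * P ^ 2) =
      (starRingEnd ℂ) c * w ^ 2 * deriv B w := by
    rw [h1, h2, map_mul, map_sum]
    have eq1 : (∑ j, (starRingEnd ℂ) ((∏ k ∈ Finset.univ.erase j,
        (w' - a k) / (1 - (starRingEnd ℂ) (a k) * w')) *
          ((1 - (starRingEnd ℂ) (a j) * a j) / (1 - (starRingEnd ℂ) (a j) * w') ^ 2))) * P ^ 2
        = w ^ 2 * ∑ j, (∏ k ∈ Finset.univ.erase j,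
        (w - a k) / (1 - (starRingEnd ℂ) (a k) * w)) *
          ((1 - (starRingEnd ℂ) (a j) * a j) / (1 - (starRingEnd ℂ) (a j) * w) ^ 2) := by
      rw [Finset.sum_mul, Finset.mul_sum]
      refine Finset.sum_congr rfl fun j _ => ?_
      rw [map_mul, map_prod, Finset.prod_congr rfl fun k _ => efac k,
        map_div₀, map_pow, map_sub, map_sub, map_mul, map_mul, map_one, hcw',
        Complex.conj_conj]
      have hxj : (1 : ℂ) - a j * w⁻¹ = (w - a j) * w⁻¹ := by field_simp
      have eP : P = ((w - a j) * ∏ k ∈ Finset.univ.erase j, (w - a k)) /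
          ((1 - (starRingEnd ℂ) (a j) * w) *
            ∏ k ∈ Finset.univ.erase j, (1 - (starRingEnd ℂ) (a k) * w)) := by
        rw [hP, Finset.prod_div_distrib,
          ← Finset.mul_prod_erase _ (fun k => w - a k) (Finset.mem_univ j),
          ← Finset.mul_prod_erase _ (fun k => 1 - (starRingEnd ℂ) (a k) * w)
            (Finset.mem_univ j)]
      have hA : (∏ k ∈ Finset.univ.erase j, (w - a k)) ≠ 0 :=
        Finset.prod_ne_zero_iff.mpr fun k _ => hsub_w k
      have hC : (∏ k ∈ Finset.univ.erase j, (1 - (starRingEnd ℂ) (a k) * w)) ≠ 0 :=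
        Finset.prod_ne_zero_iff.mpr fun k _ => hden_w k
      rw [hxj, eP, Finset.prod_div_distrib, Finset.prod_div_distrib,
        mul_comm (a j) ((starRingEnd ℂ) (a j))]
      exact blaschke_aux_field _ _ _ _ _ _ hA hC (hsub_w j) (hden_w j) hw
    calc (starRingEnd ℂ) c * (∑ j, (starRingEnd ℂ) _) * (c * P ^ 2)
        = c * ((∑ j, (starRingEnd ℂ) _) * P ^ 2) * (starRingEnd ℂ) c := by ring
      _ = (starRingEnd ℂ) c * w ^ 2 * (c * _) := by rw [eq1]; ring
  constructor
  · intro h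
    have : (starRingEnd ℂ) (deriv B w') * (c * P ^ 2) = 0 := by rw [key, h]; ring
    rcases mul_eq_zero.mp this with h' | h'
    · exact (starRingEnd ℂ).injective (by simpa using h')
    · exact absurd h' (mul_ne_zero hc0 (pow_ne_zero 2 hPne))
  · intro h
    have : (starRingEnd ℂ) c * w ^ 2 * deriv B w = 0 := by
      rw [← key, h]; simp
    rcases mul_eq_zero.mp this with h' | h'
    · exact absurd h' (mul_ne_zero (by simpa using hc0) (pow_ne_zero 2 hw))
    · exact h'
end

section
/- Let $\{z_n\}\subset\mathbb{D}$ be a sequence with $\mathrm{Im}\,z_n>0$, $z_n=r_ne^{i\varphi_n}$ with $\tfrac12\le r_n<1$ and $0<\varphi_n\le\tfrac{\pi}{2}$ for all $n$, and $\sum_n \frac{1-|z_n|^2}{|1-z_n|^2}<\infty$. Then for every $\zeta=e^{it}$ with $-\tfrac{\pi}{2}\le t<0$, $\sum_n \frac{1-|z_n|^2}{|\zeta-z_n|^2}\ \le\ \frac{\pi^2}{2}\sum_n \frac{1-|z_n|^2}{|1-z_n|^2}\ <\ \infty.$ -/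
open Complex

lemma one_sub_cos_eq (x : ℝ) : 1 - Real.cos x = 2 * Real.sin (x/2) ^ 2 := by
  have h : Real.cos (2 * (x/2)) = 2 * Real.cos (x/2) ^ 2 - 1 := Real.cos_two_mul _
  have h2 := Real.sin_sq_add_cos_sq (x/2)
  rw [show 2 * (x/2) = x by ring] at h
  nlinarith

set_option maxHeartbeats 1000000 in
lemma real_key (r φ t : ℝ) (hr : 1/2 ≤ r) (hr1 : r < 1) (hφ0 : 0 < φ)
    (hφ : φ ≤ Real.pi / 2) (ht0 : -(Real.pi / 2) ≤ t) (ht : t < 0) :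
    2 / Real.pi ^ 2 * (1 + r ^ 2 - 2 * r * Real.cos φ) ≤
      1 + r ^ 2 - 2 * r * Real.cos (φ - t) := by
  have hπ : (3:ℝ) < Real.pi := Real.pi_gt_three
  set s := φ - t with hs
  have hs1 : φ ≤ s := by simp [hs]; linarith
  have hs2 : s ≤ Real.pi := by simp [hs]; linarith
  have hC0 : (0:ℝ) < 2 / Real.pi ^ 2 := by positivity
  have h1 : 1 - Real.cos φ ≤ φ ^ 2 / 2 := by
    rw [one_sub_cos_eq]
    have hsin : Real.sin (φ/2) ≤ φ/2 := Real.sin_le (by linarith)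
    have hsin0 : 0 ≤ Real.sin (φ/2) :=
      Real.sin_nonneg_of_nonneg_of_le_pi (by linarith) (by linarith)
    nlinarith
  have h2 : 2 / Real.pi ^ 2 * s ^ 2 ≤ 1 - Real.cos s := by
    rw [one_sub_cos_eq]
    have hj : 2 / Real.pi * (s/2) ≤ Real.sin (s/2) :=
      Real.mul_le_sin (by linarith) (by linarith)
    have hs0 : 0 < s := by simp [hs]; linarith
    have h0 : 0 ≤ 2 / Real.pi * (s/2) := by
      apply mul_nonneg (by positivity); linarith
    have hsq : (2 / Real.pi * (s/2)) ^ 2 ≤ Real.sin (s/2) ^ 2 := by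
      apply sq_le_sq' <;> nlinarith
    calc 2 / Real.pi ^ 2 * s ^ 2 = 2 * (2 / Real.pi * (s/2)) ^ 2 := by
          field_simp
      _ ≤ 2 * Real.sin (s/2) ^ 2 := by linarith
  have hcosφ1 : Real.cos φ ≤ 1 := Real.cos_le_one φ
  have hcs1 : Real.cos s ≤ 1 := Real.cos_le_one s
  -- a := 1+r²-2rcosφ ≤ (1-r)² + φ²
  have ha : 1 + r ^ 2 - 2 * r * Real.cos φ ≤ (1-r)^2 + φ^2 := by nlinarith
  -- RHS ≥ (1-r)² + (1-cos s)
  have hb : (1-r)^2 + (1 - Real.cos s) ≤ 1 + r ^ 2 - 2 * r * Real.cos s := by nlinarith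
  have hc : 2 / Real.pi ^ 2 * ((1-r)^2 + φ^2) ≤ (1-r)^2 + 2 / Real.pi ^ 2 * s ^ 2 := by
    have hpi2 : 2 / Real.pi ^ 2 ≤ 1 := by
      rw [div_le_one (by positivity)]; nlinarith
    have hφ2 : φ ^ 2 ≤ s ^ 2 := by nlinarith
    have e1 := mul_le_mul_of_nonneg_right hpi2 (sq_nonneg (1-r))
    have e2 := mul_le_mul_of_nonneg_left hφ2 hC0.le
    nlinarith
  have hd : 2 / Real.pi ^ 2 * (1 + r ^ 2 - 2 * r * Real.cos φ)
      ≤ 2 / Real.pi ^ 2 * ((1-r)^2 + φ^2) := mul_le_mul_of_nonneg_left ha hC0.le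
  linarith only [hd, hc, h2, hb]


/-- Boundedness of `∑ (1-|z_n|²)/|ζ-z_n|²` (i.e. of `|B'(ζ)|`) on the lower right
quarter-arc, for a Blaschke sequence in the upper half-disk having an angular
derivative at `1`. -/
theorem blaschke_deriv_bounded_on_lower_arc (z : ℕ → ℂ) (r φ : ℕ → ℝ)
    (hpol : ∀ n, z n = (r n : ℂ) * Complex.exp (φ n * Complex.I))
    (him : ∀ n, 0 < (z n).im)
    (hr : ∀ n, 1/2 ≤ r n) (hr1 : ∀ n, r n < 1)
    (hφ0 : ∀ n, 0 < φ n) (hφ : ∀ n, φ n ≤ Real.pi / 2)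
    (hsum : Summable fun n => (1 - ‖z n‖ ^ 2) / ‖1 - z n‖ ^ 2)
    (t : ℝ) (ht0 : -(Real.pi / 2) ≤ t) (ht : t < 0) :
    (Summable fun n =>
        (1 - ‖z n‖ ^ 2) / ‖Complex.exp (t * Complex.I) - z n‖ ^ 2) ∧
      ∑' n, (1 - ‖z n‖ ^ 2) / ‖Complex.exp (t * Complex.I) - z n‖ ^ 2 ≤
        Real.pi ^ 2 / 2 *
          ∑' n, (1 - ‖z n‖ ^ 2) / ‖1 - z n‖ ^ 2 := by
  have hπ : (3:ℝ) < Real.pi := Real.pi_gt_three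
  have hterm : ∀ n, (1 - ‖z n‖ ^ 2) / ‖Complex.exp (t * Complex.I) - z n‖ ^ 2
      ≤ Real.pi ^ 2 / 2 * ((1 - ‖z n‖ ^ 2) / ‖1 - z n‖ ^ 2) := by
    intro n
    have hA : ‖Complex.exp (↑t * Complex.I) - z n‖ ^ 2
        = 1 + r n ^ 2 - 2 * r n * Real.cos (φ n - t) := by
      rw [Complex.sq_norm, Complex.normSq_apply, hpol n]
      simp only [Complex.sub_re, Complex.sub_im, Complex.exp_ofReal_mul_I_re,
        Complex.exp_ofReal_mul_I_im, Complex.mul_re, Complex.mul_im,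
        Complex.ofReal_re, Complex.ofReal_im, Real.cos_sub]
      have h1 := Real.sin_sq_add_cos_sq t
      have h2 := Real.sin_sq_add_cos_sq (φ n)
      nlinarith
    have hB : ‖1 - z n‖ ^ 2 = 1 + r n ^ 2 - 2 * r n * Real.cos (φ n) := by
      rw [Complex.sq_norm, Complex.normSq_apply, hpol n]
      simp only [Complex.sub_re, Complex.sub_im, Complex.exp_ofReal_mul_I_re,
        Complex.exp_ofReal_mul_I_im, Complex.mul_re, Complex.mul_im,
        Complex.ofReal_re, Complex.ofReal_im, Complex.one_re, Complex.one_im]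
      have h2 := Real.sin_sq_add_cos_sq (φ n)
      nlinarith
    have hkey := real_key (r n) (φ n) t (hr n) (hr1 n) (hφ0 n) (hφ n) ht0 ht
    have hBpos : (0:ℝ) < 1 + r n ^ 2 - 2 * r n * Real.cos (φ n) := by
      have := Real.cos_le_one (φ n)
      nlinarith [sq_nonneg (1 - r n), hr n, hr1 n]
    have hN : 0 < 1 - ‖z n‖ ^ 2 := by
      have : ‖z n‖ = r n := by
        rw [hpol n, norm_mul, Complex.norm_real, Real.norm_eq_abs, Complex.norm_exp_ofReal_mul_I, mul_one,
          _root_.abs_of_nonneg (by linarith [hr n] : (0:ℝ) ≤ r n)]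
      rw [this]; nlinarith [hr n, hr1 n]
    have hC0 : (0:ℝ) < 2 / Real.pi ^ 2 := by positivity
    rw [hA, hB]
    have hCB : 0 < 2 / Real.pi ^ 2 * (1 + r n ^ 2 - 2 * r n * Real.cos (φ n)) :=
      mul_pos hC0 hBpos
    calc (1 - ‖z n‖ ^ 2) / (1 + r n ^ 2 - 2 * r n * Real.cos (φ n - t))
        ≤ (1 - ‖z n‖ ^ 2) /
          (2 / Real.pi ^ 2 * (1 + r n ^ 2 - 2 * r n * Real.cos (φ n))) :=
          div_le_div_of_nonneg_left hN.le hCB hkey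
      _ = Real.pi ^ 2 / 2 *
          ((1 - ‖z n‖ ^ 2) / (1 + r n ^ 2 - 2 * r n * Real.cos (φ n))) := by
          field_simp
  have hnn : ∀ n, 0 ≤ (1 - ‖z n‖ ^ 2) /
      ‖Complex.exp (t * Complex.I) - z n‖ ^ 2 := by
    intro n
    apply div_nonneg _ (by positivity)
    have : ‖z n‖ = r n := by
      rw [hpol n, norm_mul, Complex.norm_real, Real.norm_eq_abs, Complex.norm_exp_ofReal_mul_I, mul_one,
        _root_.abs_of_nonneg (by linarith [hr n] : (0:ℝ) ≤ r n)]
    rw [this]; nlinarith [hr n, hr1 n]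
  have hsum2 : Summable fun n => Real.pi ^ 2 / 2 *
      ((1 - ‖z n‖ ^ 2) / ‖1 - z n‖ ^ 2) := hsum.mul_left _
  have hS : Summable fun n =>
      (1 - ‖z n‖ ^ 2) / ‖Complex.exp (t * Complex.I) - z n‖ ^ 2 :=
    Summable.of_nonneg_of_le hnn hterm hsum2
  refine ⟨hS, ?_⟩
  calc _ ≤ ∑' n, Real.pi ^ 2 / 2 *
        ((1 - ‖z n‖ ^ 2) / ‖1 - z n‖ ^ 2) :=
      Summable.tsum_le_tsum hterm hS hsum2
    _ = _ := tsum_mul_left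
end

section
/- Fix $c<0$, and with $z_k$ as in Example 2 (images in $\mathbb{D}$ of $\zeta_k=-i(c-2\pi ik)^2$ under $\zeta\mapsto(\zeta-1)/(\zeta+1)$), let $\widetilde{\mathcal{E}}=\{e^{it}:-\pi<t<0\}$. Then $\omega_{z_k}(\widetilde{\mathcal{E}})\cdot\log\frac{1}{1-|z_k|}\to 0$ as $k\to\infty$. -/
set_option maxHeartbeats 1000000
open Complex MeasureTheory Set Filter

lemma poisson_bound (w : ℂ) (hw : ‖w‖ < 1) (hb : 0 < w.im) :
    (2 * Real.pi)⁻¹ * ∫ t in Ioo (-Real.pi) 0,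
        (1 - ‖w‖ ^ 2) / ‖Complex.exp (t * Complex.I) - w‖ ^ 2
      ≤ (1 - ‖w‖ ^ 2) / (2 * w.im) := by
  have hπ : (0:ℝ) < Real.pi := Real.pi_pos
  set N : ℝ := 1 - ‖w‖ ^ 2 with hNdef
  have hN : 0 < N := by nlinarith [norm_nonneg w]
  set b : ℝ := w.im with hbdef
  set f : ℝ → ℝ := fun t => N / ‖Complex.exp (t * Complex.I) - w‖ ^ 2 with hf
  have hne : ∀ t : ℝ, Complex.exp ((t:ℂ) * Complex.I) - w ≠ 0 := by
    intro t h
    have h1 : Complex.exp ((t:ℂ) * Complex.I) = w := by linear_combination h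
    have := Complex.norm_exp_ofReal_mul_I t
    rw [h1] at this
    linarith
  have habs_cont : Continuous fun t : ℝ => ‖Complex.exp (t * Complex.I) - w‖ ^ 2 :=
    (continuous_norm.comp ((Complex.continuous_exp.comp (by fun_prop)).sub
      continuous_const)).pow 2
  have hfc : Continuous f := by
    apply continuous_const.div habs_cont
    intro t
    have h0 : ‖Complex.exp ((t:ℂ) * Complex.I) - w‖ ≠ 0 := by
      exact norm_ne_zero_iff.mpr (hne t)
    positivity
  -- pointwise: (b - sin t)^2 ≤ |exp(it) - w|^2
  have hden : ∀ t : ℝ, (b - Real.sin t) ^ 2 ≤ ‖Complex.exp (t * Complex.I) - w‖ ^ 2 := by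
    intro t
    rw [Complex.sq_norm, Complex.normSq_apply]
    have him : (Complex.exp ((t:ℂ) * Complex.I) - w).im = Real.sin t - b := by
      simp [Complex.exp_ofReal_mul_I_im, hbdef]
    rw [him]
    nlinarith [mul_self_nonneg ((Complex.exp ((t:ℂ) * Complex.I) - w).re)]
  set g1 : ℝ → ℝ := fun t => N / (2 / Real.pi * (-t) + b) ^ 2 with hg1
  set g2 : ℝ → ℝ := fun t => N / (2 / Real.pi * (t + Real.pi) + b) ^ 2 with hg2
  have hg1c : ContinuousOn g1 (Icc (-(Real.pi/2)) 0) := by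
    apply continuousOn_const.div (by fun_prop)
    intro t ht
    have : 0 < 2 / Real.pi * (-t) + b := by
      have h1 : 0 ≤ -t := by simp at ht; linarith [ht.2]
      have : 0 ≤ 2 / Real.pi * (-t) := by positivity
      linarith
    positivity
  have hg2c : ContinuousOn g2 (Icc (-Real.pi) (-(Real.pi/2))) := by
    apply continuousOn_const.div (by fun_prop)
    intro t ht
    have h1 : 0 ≤ t + Real.pi := by simp at ht; linarith [ht.1]
    have : 0 ≤ 2 / Real.pi * (t + Real.pi) := by positivity
    nlinarith
  have hg1i : IntervalIntegrable g1 volume (-(Real.pi/2)) 0 := by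
    apply ContinuousOn.intervalIntegrable
    rwa [uIcc_of_le (by linarith)]
  have hg2i : IntervalIntegrable g2 volume (-Real.pi) (-(Real.pi/2)) := by
    apply ContinuousOn.intervalIntegrable
    rwa [uIcc_of_le (by linarith)]
  -- FTC for g1
  have hI1 : ∫ t in (-(Real.pi/2))..0, g1 t
      = N * (Real.pi/2) * b⁻¹ - N * (Real.pi/2) * (1+b)⁻¹ := by
    set F1 : ℝ → ℝ := fun t => N * (Real.pi/2) * (2/Real.pi * (-t) + b)⁻¹ with hF1def
    have hF1 : ∀ t ∈ uIcc (-(Real.pi/2)) 0, HasDerivAt F1 (g1 t) t := by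
      intro t ht
      rw [uIcc_of_le (by linarith)] at ht
      have hpos : 0 < 2/Real.pi * (-t) + b := by
        have : 0 ≤ 2/Real.pi * (-t) :=
          mul_nonneg (by positivity) (by linarith [ht.2])
        linarith
      have h1 : HasDerivAt (fun t : ℝ => 2/Real.pi * (-t) + b) (-(2/Real.pi)) t := by
        simpa using ((hasDerivAt_id t).neg.const_mul (2/Real.pi)).add_const b
      have h2 := (h1.inv hpos.ne').const_mul (N * (Real.pi/2))
      convert h2 using 1
      case e'_4 => rfl
      case e'_5 => rfl
      case e'_8 => rfl
      rw [hg1, neg_neg, mul_div_assoc']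
      congr 1
      field_simp
    rw [intervalIntegral.integral_eq_sub_of_hasDerivAt hF1 hg1i]
    simp only [hF1def, neg_neg, neg_zero, mul_zero, zero_add]
    have h2 : 2 / Real.pi * (Real.pi/2) + b = 1 + b := by field_simp
    rw [h2]
  -- FTC for g2
  have hI2 : ∫ t in (-Real.pi)..(-(Real.pi/2)), g2 t
      = N * (Real.pi/2) * b⁻¹ - N * (Real.pi/2) * (1+b)⁻¹ := by
    set F2 : ℝ → ℝ := fun t => -(N * (Real.pi/2)) * (2/Real.pi * (t + Real.pi) + b)⁻¹ with hF2def
    have hF2 : ∀ t ∈ uIcc (-Real.pi) (-(Real.pi/2)), HasDerivAt F2 (g2 t) t := by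
      intro t ht
      rw [uIcc_of_le (by linarith)] at ht
      have hpos : 0 < 2/Real.pi * (t + Real.pi) + b := by
        have h1 : 0 ≤ t + Real.pi := by linarith [ht.1]
        have : 0 ≤ 2/Real.pi * (t + Real.pi) := by positivity
        linarith
      have h1 : HasDerivAt (fun t : ℝ => 2/Real.pi * (t + Real.pi) + b) (2/Real.pi) t := by
        simpa using (((hasDerivAt_id t).add_const Real.pi).const_mul (2/Real.pi)).add_const b
      have h2 := (h1.inv hpos.ne').const_mul (-(N * (Real.pi/2)))
      convert h2 using 1
      case e'_4 => rfl
      case e'_5 => rfl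
      case e'_8 => rfl
      rw [hg2, neg_div, mul_neg, neg_mul, neg_neg, mul_div_assoc']
      congr 1
      field_simp
    rw [intervalIntegral.integral_eq_sub_of_hasDerivAt hF2 hg2i]
    simp only [hF2def]
    have h2 : 2/Real.pi * (-(Real.pi/2) + Real.pi) + b = 1 + b := by field_simp; ring
    have h3 : 2/Real.pi * (-Real.pi + Real.pi) + b = b := by ring
    rw [h2, h3]
    ring
  -- pointwise bounds
  have hmono1 : ∫ t in (-(Real.pi/2))..0, f t ≤ ∫ t in (-(Real.pi/2))..0, g1 t := by
    apply intervalIntegral.integral_mono_on (by linarith) (hfc.intervalIntegrable _ _) hg1i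
    intro t ht
    have hs : 2/Real.pi * (-t) ≤ Real.sin (-t) :=
      Real.mul_le_sin (by linarith [ht.2]) (by linarith [ht.1])
    rw [Real.sin_neg] at hs
    have h1 : 0 < 2/Real.pi * (-t) + b := by
      have : 0 ≤ 2/Real.pi * (-t) :=
        mul_nonneg (by positivity) (by linarith [ht.2])
      linarith
    have h3 : (2/Real.pi * (-t) + b)^2 ≤ ‖Complex.exp (t * Complex.I) - w‖ ^ 2 :=
      le_trans (by nlinarith) (hden t)
    simp only [hf, hg1]
    exact div_le_div_of_nonneg_left hN.le (by positivity) h3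
  have hmono2 : ∫ t in (-Real.pi)..(-(Real.pi/2)), f t
      ≤ ∫ t in (-Real.pi)..(-(Real.pi/2)), g2 t := by
    apply intervalIntegral.integral_mono_on (by linarith) (hfc.intervalIntegrable _ _) hg2i
    intro t ht
    have hs : 2/Real.pi * (t + Real.pi) ≤ Real.sin (t + Real.pi) :=
      Real.mul_le_sin (by linarith [ht.1]) (by linarith [ht.2])
    rw [Real.sin_add_pi] at hs
    have h1 : 0 < 2/Real.pi * (t + Real.pi) + b := by
      have h0 : 0 ≤ t + Real.pi := by linarith [ht.1]
      have : 0 ≤ 2/Real.pi * (t + Real.pi) := by positivity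
      linarith
    have h3 : (2/Real.pi * (t + Real.pi) + b)^2 ≤ ‖Complex.exp (t * Complex.I) - w‖ ^ 2 :=
      le_trans (by nlinarith) (hden t)
    simp only [hf, hg2]
    exact div_le_div_of_nonneg_left hN.le (by positivity) h3
  -- combine
  have hio : ∫ t in Ioo (-Real.pi) 0, f t = ∫ t in (-Real.pi)..0, f t := by
    rw [intervalIntegral.integral_of_le (by linarith), integral_Ioc_eq_integral_Ioo]
  have hsplit : ∫ t in (-Real.pi)..0, f t
      = (∫ t in (-Real.pi)..(-(Real.pi/2)), f t) + ∫ t in (-(Real.pi/2))..0, f t :=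
    (intervalIntegral.integral_add_adjacent_intervals (hfc.intervalIntegrable _ _)
      (hfc.intervalIntegrable _ _)).symm
  have hbinv : (0:ℝ) ≤ (1+b)⁻¹ := by positivity
  have htot : ∫ t in Ioo (-Real.pi) 0, f t ≤ N * Real.pi / b := by
    rw [hio, hsplit]
    calc (∫ t in (-Real.pi)..(-(Real.pi/2)), f t) + ∫ t in (-(Real.pi/2))..0, f t
        ≤ (N * (Real.pi/2) * b⁻¹ - N * (Real.pi/2) * (1+b)⁻¹)
          + (N * (Real.pi/2) * b⁻¹ - N * (Real.pi/2) * (1+b)⁻¹) := by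
          apply add_le_add (hmono2.trans hI2.le) (hmono1.trans hI1.le)
      _ ≤ N * Real.pi / b := by
          have h4 : 0 ≤ N * (Real.pi/2) * (1+b)⁻¹ := by positivity
          have h6 : N * Real.pi / b = N*(Real.pi/2)*b⁻¹ + N*(Real.pi/2)*b⁻¹ := by
            rw [div_eq_mul_inv]; ring
          rw [h6]
          linarith
  calc (2 * Real.pi)⁻¹ * ∫ t in Ioo (-Real.pi) 0, f t
      ≤ (2 * Real.pi)⁻¹ * (N * Real.pi / b) := by
        apply mul_le_mul_of_nonneg_left htot (by positivity)
    _ = N / (2 * b) := by field_simp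


theorem example2_arith (c : ℝ) (hc : c < 0) (k : ℕ) (hk : -c ≤ (k:ℝ)) (hk1 : (1:ℝ) ≤ k)
    (z : ℂ)
    (hz : z = ((((4*Real.pi*(-c)*k : ℝ)):ℂ) + ((4*Real.pi^2*(k:ℝ)^2 - c^2 : ℝ):ℂ)*Complex.I - 1) /
      ((((4*Real.pi*(-c)*k : ℝ)):ℂ) + ((4*Real.pi^2*(k:ℝ)^2 - c^2 : ℝ):ℂ)*Complex.I + 1)) :
    z.im = 2*(4*Real.pi^2*(k:ℝ)^2 - c^2) /
        ((4*Real.pi*(-c)*k + 1)^2 + (4*Real.pi^2*(k:ℝ)^2 - c^2)^2) ∧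
    1 - ‖z‖ ^ 2 = 4*(4*Real.pi*(-c)*k) /
        ((4*Real.pi*(-c)*k + 1)^2 + (4*Real.pi^2*(k:ℝ)^2 - c^2)^2) := by
  have hπ : (0:ℝ) < Real.pi := Real.pi_pos
  set X : ℝ := 4*Real.pi*(-c)*k with hX
  set Y : ℝ := 4*Real.pi^2*(k:ℝ)^2 - c^2 with hY
  have hx : 0 < X := by
    rw [hX]
    exact mul_pos (mul_pos (by positivity) (by linarith)) (by linarith)
  have hc2 : c^2 ≤ (k:ℝ)^2 := by nlinarith
  have hksq : (1:ℝ) ≤ (k:ℝ)^2 := by nlinarith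
  have hy : 0 < Y := by
    rw [hY]
    have h9 : (0:ℝ) ≤ (Real.pi^2 - 9) * (k:ℝ)^2 :=
      mul_nonneg (by nlinarith [Real.pi_gt_three]) (sq_nonneg _)
    nlinarith
  have hD : 0 < (X+1)^2 + Y^2 := by positivity
  have hden : ((X:ℂ) + (Y:ℂ)*Complex.I + 1) ≠ 0 := by
    intro h
    have : ((X:ℂ) + (Y:ℂ)*Complex.I + 1).re = 0 := by rw [h]; simp
    simp [Complex.add_re] at this
    linarith
  constructor
  · rw [hz, Complex.div_im]
    have h1 : (((X:ℝ):ℂ) + ((Y:ℝ):ℂ)*Complex.I - 1).im = Y := by simp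
    have h2 : (((X:ℝ):ℂ) + ((Y:ℝ):ℂ)*Complex.I + 1).re = X + 1 := by simp
    have h3 : (((X:ℝ):ℂ) + ((Y:ℝ):ℂ)*Complex.I - 1).re = X - 1 := by simp
    have h4 : (((X:ℝ):ℂ) + ((Y:ℝ):ℂ)*Complex.I + 1).im = Y := by simp
    have h5 : Complex.normSq (((X:ℝ):ℂ) + ((Y:ℝ):ℂ)*Complex.I + 1) = (X+1)^2 + Y^2 := by
      rw [Complex.normSq_apply, h2, h4]; ring
    rw [h1, h2, h3, h4, h5]
    field_simp
    ring
  · rw [hz, Complex.sq_norm, Complex.normSq_div]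
    have h5 : Complex.normSq (((X:ℝ):ℂ) + ((Y:ℝ):ℂ)*Complex.I + 1) = (X+1)^2 + Y^2 := by
      rw [Complex.normSq_apply]; simp; ring
    have h6 : Complex.normSq (((X:ℝ):ℂ) + ((Y:ℝ):ℂ)*Complex.I - 1) = (X-1)^2 + Y^2 := by
      rw [Complex.normSq_apply]; simp; ring
    rw [h5, h6]
    field_simp
    ring

/-- In Example 2, the harmonic measure of the lower semicircle seen from `z_k`,
multiplied by `log(1/(1-|z_k|))`, tends to `0`. -/
theorem example2_firstcond (c : ℝ) (hc : c < 0)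
    (ζ : ℕ → ℂ)
    (hζ : ζ = fun (k : ℕ) => -Complex.I * ((c : ℂ) - 2 * Real.pi * Complex.I * (k : ℂ)) ^ 2)
    (z : ℕ → ℂ) (hz : z = fun k => (ζ k - 1) / (ζ k + 1))
    (ω : ℕ → ℝ)
    (hω : ω = fun k => (2 * Real.pi)⁻¹ *
      ∫ t in Ioo (-Real.pi) 0,
        (1 - ‖z k‖ ^ 2) /
          ‖Complex.exp (t * Complex.I) - z k‖ ^ 2) :
    Tendsto (fun k => ω k * Real.log (1 / (1 - ‖z k‖))) atTop (nhds 0) := by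
  have hπ : (0:ℝ) < Real.pi := Real.pi_pos
  have hmc : (0:ℝ) < -c := by linarith
  have hzeq : ∀ k : ℕ, z k =
      ((((4*Real.pi*(-c)*k : ℝ)):ℂ) + ((4*Real.pi^2*(k:ℝ)^2 - c^2 : ℝ):ℂ)*Complex.I - 1) /
      ((((4*Real.pi*(-c)*k : ℝ)):ℂ) + ((4*Real.pi^2*(k:ℝ)^2 - c^2 : ℝ):ℂ)*Complex.I + 1) := by
    intro k
    rw [hz]
    simp only
    rw [hζ]
    simp only
    have hid : -Complex.I * ((c:ℂ) - 2*Real.pi*Complex.I*(k:ℂ))^2 =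
        (((4*Real.pi*(-c)*k : ℝ)):ℂ) + ((4*Real.pi^2*(k:ℝ)^2 - c^2 : ℝ):ℂ)*Complex.I := by
      push_cast
      linear_combination (4*Real.pi*c*(k:ℂ) - 4*Real.pi^2*(k:ℂ)^2*Complex.I) * Complex.I_sq
    rw [hid]
  set C₁ : ℝ := 2*(-c)/Real.pi with hC₁def
  set C₂ : ℝ := ((4*Real.pi*(-c)+1)^2 + 16*Real.pi^4 + 8*Real.pi*(-c)) / (8*Real.pi*(-c))
    with hC₂def
  have hC₂1 : 1 ≤ C₂ := by
    rw [hC₂def, le_div_iff₀ (by positivity)]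
    nlinarith [sq_nonneg (4*Real.pi*(-c)+1), pow_pos hπ 4]
  have hC₂0 : 0 < C₂ := by linarith
  -- the dominating sequence tends to zero
  have hfun : Tendsto (fun k : ℕ => C₁/(k:ℝ) * (Real.log C₂ + 4*Real.log k)) atTop (nhds 0) := by
    have t1 : Tendsto (fun k : ℕ => Real.log (k:ℝ) / (k:ℝ)) atTop (nhds 0) := by
      have h := (Real.tendsto_pow_log_div_mul_add_atTop 1 0 1 one_ne_zero).comp
        tendsto_natCast_atTop_atTop (α := ℕ)
      simpa [Function.comp_def] using h
    have t2 : Tendsto (fun k : ℕ => ((k:ℝ))⁻¹) atTop (nhds 0) :=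
      tendsto_inv_atTop_nhds_zero_nat
    have t3 := (t2.const_mul (C₁*Real.log C₂)).add (t1.const_mul (4*C₁))
    rw [mul_zero, mul_zero, add_zero] at t3
    apply t3.congr'
    filter_upwards [eventually_ge_atTop 1] with k hk
    have hk0 : ((k:ℝ)) ≠ 0 := by
      have : (1:ℝ) ≤ (k:ℝ) := by exact_mod_cast hk
      linarith
    field_simp
  -- the key bounds, for k large
  have key : ∀ k : ℕ, ⌈-c⌉₊ + 1 ≤ k →
      0 ≤ ω k * Real.log (1 / (1 - ‖z k‖)) ∧
      ω k * Real.log (1 / (1 - ‖z k‖)) ≤ C₁/(k:ℝ) * (Real.log C₂ + 4*Real.log k) := by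
    intro k hkK
    have hk1 : (1:ℝ) ≤ (k:ℝ) := by
      have : (1:ℕ) ≤ k := le_trans (Nat.le_add_left 1 _) hkK
      exact_mod_cast this
    have hk : -c ≤ (k:ℝ) := by
      have h1 : (⌈-c⌉₊ : ℝ) ≤ (k:ℝ) := by
        have : ⌈-c⌉₊ ≤ k := le_trans (Nat.le_succ _) hkK
        exact_mod_cast this
      exact le_trans (Nat.le_ceil _) h1
    have hk0 : (0:ℝ) < (k:ℝ) := by linarith
    obtain ⟨him, habs⟩ := example2_arith c hc k hk hk1 (z k) (hzeq k)
    set X : ℝ := 4*Real.pi*(-c)*(k:ℝ) with hX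
    set Y : ℝ := 4*Real.pi^2*(k:ℝ)^2 - c^2 with hY
    have hx : 0 < X := by rw [hX]; positivity
    have hc2 : c^2 ≤ (k:ℝ)^2 := by nlinarith
    have hksq : (1:ℝ) ≤ (k:ℝ)^2 := by nlinarith
    have h9 : (0:ℝ) ≤ (Real.pi^2 - 9) * (k:ℝ)^2 :=
      mul_nonneg (by nlinarith [Real.pi_gt_three]) (sq_nonneg _)
    have hy : 0 < Y := by rw [hY]; nlinarith
    have hD : 0 < (X+1)^2 + Y^2 := by positivity
    have h0 : 0 < 1 - ‖z k‖^2 := by rw [habs]; positivity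
    have habs1 : ‖z k‖ < 1 := by nlinarith [norm_nonneg (z k)]
    have himpos : 0 < (z k).im := by rw [him]; positivity
    have h1 : 0 < 1 - ‖z k‖ := by linarith
    have hLnonneg : 0 ≤ Real.log (1/(1 - ‖z k‖)) := by
      apply Real.log_nonneg
      rw [le_div_iff₀ h1, one_mul]
      nlinarith [norm_nonneg (z k)]
    have hωnn : 0 ≤ ω k := by
      rw [hω]
      apply mul_nonneg (by positivity)
      apply setIntegral_nonneg measurableSet_Ioo
      intro t _
      exact div_nonneg (by linarith) (by positivity)
    refine ⟨mul_nonneg hωnn hLnonneg, ?_⟩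
    have hωle : ω k ≤ X/Y := by
      rw [hω]
      refine le_trans (poisson_bound (z k) habs1 himpos) ?_
      rw [habs, him]
      apply le_of_eq
      field_simp
      ring
    have hXD : 2*X/((X+1)^2 + Y^2) = (1 - ‖z k‖^2)/2 := by
      rw [habs]; ring
    have h2 : 2*X/((X+1)^2 + Y^2) ≤ 1 - ‖z k‖ := by
      rw [hXD]
      nlinarith [sq_nonneg (1 - ‖z k‖)]
    have h2X : 0 < 2*X/((X+1)^2 + Y^2) := by positivity
    have hinv : 1/(1 - ‖z k‖) ≤ ((X+1)^2 + Y^2)/(2*X) := by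
      rw [div_le_div_iff₀ h1 (by positivity), one_mul]
      have h2' := mul_le_mul_of_nonneg_left h2 hD.le
      rw [mul_div_assoc', mul_comm ((X+1)^2 + Y^2) (2*X), mul_div_assoc,
        div_self hD.ne', mul_one] at h2'
      linarith
    have hDk : ((X+1)^2 + Y^2)/(2*X) ≤ C₂ * (k:ℝ)^4 := by
      rw [div_le_iff₀ (by positivity)]
      have hkk : (k:ℝ) ≤ (k:ℝ)^2 := by nlinarith
      have e1 : X + 1 ≤ (4*Real.pi*(-c)+1)*(k:ℝ)^2 := by
        rw [hX]
        nlinarith [mul_le_mul_of_nonneg_left hkk (show (0:ℝ) ≤ 4*Real.pi*(-c) by positivity)]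
      have e2 : (X+1)^2 ≤ ((4*Real.pi*(-c)+1)*(k:ℝ)^2)^2 :=
        pow_le_pow_left₀ (by positivity) e1 2
      have e3 : Y ≤ 4*Real.pi^2*(k:ℝ)^2 := by rw [hY]; nlinarith [sq_nonneg c]
      have e4 : Y^2 ≤ (4*Real.pi^2*(k:ℝ)^2)^2 := pow_le_pow_left₀ hy.le e3 2
      have step1 : (X+1)^2 + Y^2 ≤ ((4*Real.pi*(-c)+1)^2 + 16*Real.pi^4) * (k:ℝ)^4 := by
        nlinarith [e2, e4]
      have e5 : (k:ℝ)^4 ≤ (k:ℝ)^5 := pow_le_pow_right₀ hk1 (by norm_num)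
      have hC3 : (0:ℝ) ≤ (4*Real.pi*(-c)+1)^2 + 16*Real.pi^4 := by positivity
      have step2 : ((4*Real.pi*(-c)+1)^2+16*Real.pi^4) * (k:ℝ)^4
          ≤ ((4*Real.pi*(-c)+1)^2+16*Real.pi^4) * (k:ℝ)^5 :=
        mul_le_mul_of_nonneg_left e5 hC3
      have e7 : (0:ℝ) ≤ 8*Real.pi*(-c)*(k:ℝ)^5 := by positivity
      have hC2m : C₂ * (8*Real.pi*(-c)) =
          (4*Real.pi*(-c)+1)^2 + 16*Real.pi^4 + 8*Real.pi*(-c) := by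
        rw [hC₂def]
        exact div_mul_cancel₀ _ (by positivity)
      have step3 : C₂ * (k:ℝ)^4 * (2*X)
          = ((4*Real.pi*(-c)+1)^2 + 16*Real.pi^4 + 8*Real.pi*(-c)) * (k:ℝ)^5 := by
        rw [hX]
        linear_combination (k:ℝ)^5 * hC2m
      linarith [step1, step2, e7, step3]
    have hCk4 : 0 < C₂ * (k:ℝ)^4 := by positivity
    have hL : Real.log (1/(1 - ‖z k‖)) ≤ Real.log C₂ + 4*Real.log k := by
      have hlog := (Real.log_le_log_iff (one_div_pos.mpr h1) hCk4).mpr (hinv.trans hDk)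
      rwa [Real.log_mul hC₂0.ne' (by positivity), Real.log_pow] at hlog
    have hXY : X/Y ≤ C₁/(k:ℝ) := by
      rw [div_le_div_iff₀ hy hk0, hC₁def, div_mul_eq_mul_div, le_div_iff₀ hπ]
      have hcp : c^2 ≤ 2*Real.pi^2*(k:ℝ)^2 := by nlinarith
      have hfact : (0:ℝ) ≤ 2*(-c) * (2*Real.pi^2*(k:ℝ)^2 - c^2) :=
        mul_nonneg (by linarith) (by linarith)
      rw [hX, hY]
      linarith [hfact]
    have hlognn : 0 ≤ Real.log C₂ + 4*Real.log k :=
      add_nonneg (Real.log_nonneg hC₂1)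
        (mul_nonneg (by norm_num) (Real.log_nonneg hk1))
    calc ω k * Real.log (1 / (1 - ‖z k‖))
        ≤ (X/Y) * (Real.log C₂ + 4*Real.log k) :=
          mul_le_mul hωle hL hLnonneg (div_nonneg hx.le hy.le)
      _ ≤ C₁/(k:ℝ) * (Real.log C₂ + 4*Real.log k) :=
          mul_le_mul_of_nonneg_right hXY hlognn
  apply tendsto_of_tendsto_of_tendsto_of_le_of_le' tendsto_const_nhds hfun
  · filter_upwards [eventually_ge_atTop (⌈-c⌉₊ + 1)] with k hkK
    exact (key k hkK).1
  · filter_upwards [eventually_ge_atTop (⌈-c⌉₊ + 1)] with k hkK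
    exact (key k hkK).2
end
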